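/- If a connected graph Γ has a separating vertex such that each of the two resulting components contains a cycle, then the graph polynomial factors as the product of the graph polynomials of the two components, each non-constant; hence the graph hypersurface X_Γ is reducible. -/

import Mathlib

/-- A multigraph: vertices `V`, edges `E`, each edge `e` has endpoints `fst e` and `snd e`
(loops and parallel edges allowed). -/
structure Multigraph where
  V : Type
  E : Type
  fst : E → V
  snd : E → V

/-- Adjacency of two vertices through an edge belonging to the edge set `S`. -/
def Multigraph.adjIn (G : Multigraph) (S : Set G.E) (u v : G.V) : Prop :=
  ∃ e ∈ S, (G.fst e = u ∧ G.snd e = v) ∨ (G.fst e = v ∧ G.snd e = u)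

/-- The edge set `S` connects the whole vertex set of `G`. -/
def Multigraph.ConnectsIn (G : Multigraph) (S : Set G.E) : Prop :=
  ∀ u v : G.V, Relation.ReflTransGen (G.adjIn S) u v

/-- A spanning tree of `G`: a minimal connecting edge set. -/
def Multigraph.IsSpanningTree (G : Multigraph) (S : Set G.E) : Prop :=
  G.ConnectsIn S ∧ ∀ e ∈ S, ¬ G.ConnectsIn (S \ {e})

/-- The edge set `S` contains a cycle: some edge of `S` has its endpoints still
connected after its removal from `S`. -/
def Multigraph.HasCycleIn (G : Multigraph) (S : Set G.E) : Prop :=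
  ∃ e ∈ S, Relation.ReflTransGen (G.adjIn (S \ {e})) (G.fst e) (G.snd e)

open scoped Classical in
/-- The Kirchhoff graph polynomial `Ψ_Γ = ∑_{T spanning tree} ∏_{e ∉ T} t_e`. -/
noncomputable def Multigraph.kirchhoff (G : Multigraph) [Fintype G.E] [DecidableEq G.E] :
    MvPolynomial G.E ℤ :=
  ∑ T ∈ Finset.univ.filter (fun T : Finset G.E => G.IsSpanningTree ↑T),
    ∏ e ∈ Tᶜ, MvPolynomial.X e

/-- The graph hypersurface `X_Γ = {t ∈ ℙ^{n-1} | Ψ_Γ(t) = 0}`. -/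
noncomputable def Multigraph.hypersurface (G : Multigraph) [Fintype G.E] [DecidableEq G.E]
    (k : Type) [Field k] : Set (Projectivization k (G.E → k)) :=
  {x | MvPolynomial.eval₂ (Int.castRingHom k) x.rep G.kirchhoff = 0}

/-- `Σ_n`, the union of the coordinate hyperplanes in `ℙ^{n-1}`. -/
def coordHyperplanes (k : Type) [Field k] (E : Type) :
    Set (Projectivization k (E → k)) :=
  {x | ∃ e, x.rep e = 0}

/-- The subgraph of `G` on a vertex set `W` with edge set `S` (all edges of `S`
having both endpoints in `W`). -/
def Multigraph.restrict (G : Multigraph) [DecidableEq G.E] (W : Set G.V) (S : Finset G.E)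
    (h : ∀ e ∈ S, G.fst e ∈ W ∧ G.snd e ∈ W) : Multigraph where
  V := W
  E := {e // e ∈ S}
  fst := fun e => ⟨G.fst e, (h e e.2).1⟩
  snd := fun e => ⟨G.snd e, (h e e.2).2⟩

instance (G : Multigraph) [DecidableEq G.E] (W : Set G.V) (S : Finset G.E)
    (h : ∀ e ∈ S, G.fst e ∈ W ∧ G.snd e ∈ W) : Fintype (G.restrict W S h).E :=
  inferInstanceAs (Fintype {e // e ∈ S})

instance (G : Multigraph) [DecidableEq G.E] (W : Set G.V) (S : Finset G.E)
    (h : ∀ e ∈ S, G.fst e ∈ W ∧ G.snd e ∈ W) : DecidableEq (G.restrict W S h).E :=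
  inferInstanceAs (DecidableEq {e // e ∈ S})

namespace Multigraph

open Relation

lemma adjIn_symm (G : Multigraph) (S : Set G.E) : Symmetric (G.adjIn S) := by
  rintro u v ⟨e, he, h | h⟩
  · exact ⟨e, he, Or.inr h⟩
  · exact ⟨e, he, Or.inl h⟩

lemma adjIn_mono (G : Multigraph) {S S' : Set G.E} (h : S ⊆ S') {u v : G.V}
    (huv : G.adjIn S u v) : G.adjIn S' u v := by
  obtain ⟨e, he, h'⟩ := huv; exact ⟨e, h he, h'⟩

lemma rtg_symm (G : Multigraph) (S : Set G.E) :
    Symmetric (Relation.ReflTransGen (G.adjIn S)) :=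
  fun x y h => (@Relation.ReflTransGen.stdSymm _ _ ⟨G.adjIn_symm S⟩).symm x y h

lemma rtg_mono (G : Multigraph) {S S' : Set G.E} (h : S ⊆ S') {u v : G.V}
    (huv : Relation.ReflTransGen (G.adjIn S) u v) :
    Relation.ReflTransGen (G.adjIn S') u v :=
  Relation.ReflTransGen.mono (fun _ _ => G.adjIn_mono h) _ _ huv

/-- detour: removing a cycle edge preserves connectivity -/
lemma rtg_sdiff (G : Multigraph) {T : Set G.E} {e : G.E}
    (hd : Relation.ReflTransGen (G.adjIn (T \ {e})) (G.fst e) (G.snd e))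
    {u v : G.V} (huv : Relation.ReflTransGen (G.adjIn T) u v) :
    Relation.ReflTransGen (G.adjIn (T \ {e})) u v := by
  induction huv with
  | refl => exact .refl
  | tail _ hstep ih =>
    rename_i b c _
    obtain ⟨f, hf, hor⟩ := hstep
    by_cases hfe : f = e
    · subst hfe
      rcases hor with ⟨h1, h2⟩ | ⟨h1, h2⟩
      · exact ih.trans (h1 ▸ h2 ▸ hd)
      · exact ih.trans (h2 ▸ h1 ▸ G.rtg_symm _ hd)
    · exact ih.tail ⟨f, ⟨hf, hfe⟩, hor⟩

lemma connectsIn_sdiff (G : Multigraph) {T : Set G.E} {e : G.E}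
    (hconn : G.ConnectsIn T)
    (hd : Relation.ReflTransGen (G.adjIn (T \ {e})) (G.fst e) (G.snd e)) :
    G.ConnectsIn (T \ {e}) :=
  fun u v => G.rtg_sdiff hd (hconn u v)

end Multigraph

namespace Multigraph

lemma exists_spanningTree (G : Multigraph) [Fintype G.E] [DecidableEq G.E]
    (U : Finset G.E) (hU : G.ConnectsIn ↑U) :
    ∃ T : Finset G.E, T ⊆ U ∧ G.IsSpanningTree ↑T := by
  induction U using Finset.strongInduction with
  | _ U ih =>
    by_cases hmin : ∀ e ∈ (↑U : Set G.E), ¬ G.ConnectsIn (↑U \ {e})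
    · exact ⟨U, le_refl _, hU, hmin⟩
    · push_neg at hmin
      obtain ⟨e, he, hconn⟩ := hmin
      have he' : e ∈ U := he
      have hset : (↑U \ {e} : Set G.E) = ↑(U.erase e) := by
        simp [Finset.coe_erase]
      rw [hset] at hconn
      obtain ⟨T, hT1, hT2⟩ := ih (U.erase e) (Finset.erase_ssubset he') hconn
      exact ⟨T, hT1.trans (Finset.erase_subset _ _), hT2⟩

end Multigraph




namespace Multigraph

variable (G : Multigraph) [DecidableEq G.E] (W : Set G.V) (S : Finset G.E)
    (h : ∀ e ∈ S, G.fst e ∈ W ∧ G.snd e ∈ W)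

/-- transfer of paths from restricted graph down to `G` -/
lemma rtg_restrict_down {T : Set G.E} (hTS : T ⊆ ↑S) {u v : (G.restrict W S h).V}
    (huv : Relation.ReflTransGen ((G.restrict W S h).adjIn (Subtype.val ⁻¹' T)) u v) :
    Relation.ReflTransGen (G.adjIn T) u.val v.val := by
  induction huv with
  | refl => exact .refl
  | tail _ hstep ih =>
    obtain ⟨e, he, hor⟩ := hstep
    refine ih.tail ⟨e.val, he, ?_⟩
    rcases hor with ⟨h1, h2⟩ | ⟨h1, h2⟩
    · exact Or.inl ⟨congrArg Subtype.val h1, congrArg Subtype.val h2⟩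
    · exact Or.inr ⟨congrArg Subtype.val h1, congrArg Subtype.val h2⟩

/-- transfer of paths from `G` up to restricted graph -/
lemma rtg_restrict_up {T : Set G.E} (hTS : T ⊆ ↑S) {u v : G.V}
    (huv : Relation.ReflTransGen (G.adjIn T) u v) (hu : u ∈ W) (hv : v ∈ W) :
    Relation.ReflTransGen ((G.restrict W S h).adjIn (Subtype.val ⁻¹' T)) ⟨u, hu⟩ ⟨v, hv⟩ := by
  induction huv using Relation.ReflTransGen.head_induction_on with
  | refl => exact .refl
  | head hstep _ ih =>
    rename_i b c _
    obtain ⟨e, he, hor⟩ := hstep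
    have heS : e ∈ S := hTS he
    have hbc : b ∈ W ∧ c ∈ W := by
      rcases hor with ⟨h1, h2⟩ | ⟨h1, h2⟩
      · exact ⟨h1 ▸ (h e heS).1, h2 ▸ (h e heS).2⟩
      · exact ⟨h2 ▸ (h e heS).2, h1 ▸ (h e heS).1⟩
    refine Relation.ReflTransGen.head (b := ⟨c, hbc.2⟩) ⟨⟨e, heS⟩, he, ?_⟩ (ih hbc.2)
    rcases hor with ⟨h1, h2⟩ | ⟨h1, h2⟩
    · exact Or.inl ⟨Subtype.ext h1, Subtype.ext h2⟩
    · exact Or.inr ⟨Subtype.ext h1, Subtype.ext h2⟩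

end Multigraph

namespace Multigraph

variable {G : Multigraph}

/-- Path surgery: a path ending in `W₁` yields a path within the `A`-edges. -/
lemma path_split {A B : Set G.E} {W₁ W₂ : Set G.V} {a : G.V}
    (hAB : ∀ e : G.E, e ∈ A ∨ e ∈ B)
    (hWinter : W₁ ∩ W₂ = {a})
    (hA : ∀ e ∈ A, G.fst e ∈ W₁ ∧ G.snd e ∈ W₁)
    (hB : ∀ e ∈ B, G.fst e ∈ W₂ ∧ G.snd e ∈ W₂)
    {T : Set G.E} {u v : G.V}
    (huv : Relation.ReflTransGen (G.adjIn T) u v) (hv : v ∈ W₁) :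
    (u ∈ W₁ → Relation.ReflTransGen (G.adjIn (T ∩ A)) u v) ∧
      (u ∈ W₂ → Relation.ReflTransGen (G.adjIn (T ∩ A)) a v) := by
  induction huv using Relation.ReflTransGen.head_induction_on with
  | refl =>
    constructor
    · intro _; exact .refl
    · intro hu
      have : v = a := by
        have : v ∈ W₁ ∩ W₂ := ⟨hv, hu⟩
        rwa [hWinter] at this
      exact this ▸ .refl
  | head hstep _ ih =>
    rename_i b c _
    obtain ⟨e, he, hor⟩ := hstep
    have hbc1 : e ∈ A → b ∈ W₁ ∧ c ∈ W₁ := by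
      intro heA
      rcases hor with ⟨h1, h2⟩ | ⟨h1, h2⟩
      · exact ⟨h1 ▸ (hA e heA).1, h2 ▸ (hA e heA).2⟩
      · exact ⟨h2 ▸ (hA e heA).2, h1 ▸ (hA e heA).1⟩
    have hbc2 : e ∈ B → b ∈ W₂ ∧ c ∈ W₂ := by
      intro heB
      rcases hor with ⟨h1, h2⟩ | ⟨h1, h2⟩
      · exact ⟨h1 ▸ (hB e heB).1, h2 ▸ (hB e heB).2⟩
      · exact ⟨h2 ▸ (hB e heB).2, h1 ▸ (hB e heB).1⟩
    constructor
    · intro hb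
      rcases hAB e with heA | heB
      · exact Relation.ReflTransGen.head ⟨e, ⟨he, heA⟩, hor⟩ (ih.1 (hbc1 heA).2)
      · have hba : b = a := by
          have : b ∈ W₁ ∩ W₂ := ⟨hb, (hbc2 heB).1⟩
          rwa [hWinter] at this
        exact hba ▸ ih.2 (hbc2 heB).2
    · intro hb
      rcases hAB e with heA | heB
      · have hba : b = a := by
          have : b ∈ W₁ ∩ W₂ := ⟨(hbc1 heA).1, hb⟩
          rwa [hWinter] at this
        exact Relation.ReflTransGen.head ⟨e, ⟨he, heA⟩, hba ▸ hor⟩ (ih.1 (hbc1 heA).2)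
      · exact ih.2 (hbc2 heB).2

end Multigraph

namespace Multigraph

section Sep

variable (G : Multigraph) [Fintype G.E] [DecidableEq G.E]
    (W₁ W₂ : Set G.V) (a : G.V) (S : Finset G.E)
    (hWunion : W₁ ∪ W₂ = Set.univ) (hWinter : W₁ ∩ W₂ = {a})
    (h₁ : ∀ e ∈ S, G.fst e ∈ W₁ ∧ G.snd e ∈ W₁)
    (h₂ : ∀ e ∈ Sᶜ, G.fst e ∈ W₂ ∧ G.snd e ∈ W₂)

include hWunion hWinter h₁ h₂

lemma connects_iff (T : Set G.E) :
    G.ConnectsIn T ↔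
      (G.restrict W₁ S h₁).ConnectsIn (Subtype.val ⁻¹' T) ∧
      (G.restrict W₂ Sᶜ h₂).ConnectsIn (Subtype.val ⁻¹' T) := by
  have ha1 : a ∈ W₁ := by
    have : a ∈ W₁ ∩ W₂ := hWinter ▸ rfl
    exact this.1
  have ha2 : a ∈ W₂ := by
    have : a ∈ W₁ ∩ W₂ := hWinter ▸ rfl
    exact this.2
  have hAB : ∀ e : G.E, e ∈ (↑S : Set G.E) ∨ e ∈ (↑(Sᶜ) : Set G.E) := by
    intro e; by_cases he : e ∈ S
    · exact Or.inl he
    · exact Or.inr (by simpa using he)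
  have hpre1 : Subtype.val ⁻¹' (T ∩ ↑S) = (Subtype.val ⁻¹' T : Set {e // e ∈ S}) := by
    ext e; simp [e.2]
  have hpre2 : Subtype.val ⁻¹' (T ∩ ↑(Sᶜ)) = (Subtype.val ⁻¹' T : Set {e // e ∈ Sᶜ}) := by
    ext e; simp; exact fun _ => Finset.mem_compl.mp e.2
  constructor
  · intro hc
    constructor
    · intro u v
      have h' := (path_split hAB hWinter h₁ h₂ (hc u.val v.val) v.2).1 u.2
      have := G.rtg_restrict_up W₁ S h₁ Set.inter_subset_right h' u.2 v.2
      erw [hpre1] at this; exact this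
    · intro u v
      have hAB' : ∀ e : G.E, e ∈ (↑(Sᶜ) : Set G.E) ∨ e ∈ (↑S : Set G.E) :=
        fun e => (hAB e).symm
      have h' := (path_split hAB' (Set.inter_comm W₁ W₂ ▸ hWinter) h₂ h₁
        (hc u.val v.val) v.2).1 u.2
      have := G.rtg_restrict_up W₂ Sᶜ h₂ Set.inter_subset_right h' u.2 v.2
      erw [hpre2] at this; exact this
  · rintro ⟨hc1, hc2⟩ u v
    have key : ∀ w : G.V, Relation.ReflTransGen (G.adjIn T) w a := by
      intro w
      have hw : w ∈ W₁ ∪ W₂ := hWunion ▸ Set.mem_univ w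
      rcases hw with hw | hw
      · have := hc1 ⟨w, hw⟩ ⟨a, ha1⟩
        erw [← hpre1] at this
        exact G.rtg_mono Set.inter_subset_left
          (G.rtg_restrict_down W₁ S h₁ Set.inter_subset_right this)
      · have := hc2 ⟨w, hw⟩ ⟨a, ha2⟩
        erw [← hpre2] at this
        exact G.rtg_mono Set.inter_subset_left
          (G.rtg_restrict_down W₂ Sᶜ h₂ Set.inter_subset_right this)
    exact (key u).trans (G.rtg_symm _ (key v))

end Sep

end Multigraph

namespace Multigraph

section Sep2

variable (G : Multigraph) [Fintype G.E] [DecidableEq G.E]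
    (W₁ W₂ : Set G.V) (a : G.V) (S : Finset G.E)
    (hWunion : W₁ ∪ W₂ = Set.univ) (hWinter : W₁ ∩ W₂ = {a})
    (h₁ : ∀ e ∈ S, G.fst e ∈ W₁ ∧ G.snd e ∈ W₁)
    (h₂ : ∀ e ∈ Sᶜ, G.fst e ∈ W₂ ∧ G.snd e ∈ W₂)

include hWunion hWinter h₁ h₂

lemma spanningTree_iff (T : Finset G.E) :
    G.IsSpanningTree ↑T ↔
      (G.restrict W₁ S h₁).IsSpanningTree (↑(T.subtype (· ∈ S)) : Set {e // e ∈ S}) ∧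
      (G.restrict W₂ Sᶜ h₂).IsSpanningTree (↑(T.subtype (· ∈ Sᶜ)) : Set {e // e ∈ Sᶜ}) := by
  have hC := G.connects_iff W₁ W₂ a S hWunion hWinter h₁ h₂
  have coe1 : ∀ (U : Finset G.E),
      (↑(U.subtype (· ∈ S)) : Set {e // e ∈ S}) = Subtype.val ⁻¹' ↑U := by
    intro U; ext e; simp
  have coe2 : ∀ (U : Finset G.E),
      (↑(U.subtype (· ∈ Sᶜ)) : Set {e // e ∈ Sᶜ}) = Subtype.val ⁻¹' ↑U := by
    intro U; ext e; simp
  have pr1_diff : ∀ (e : {f // f ∈ S}),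
      (Subtype.val ⁻¹' (↑T \ {e.val}) : Set {f // f ∈ S}) = Subtype.val ⁻¹' ↑T \ {e} := by
    intro e; ext f; simp
  have pr2_diff : ∀ (e : {f // f ∈ Sᶜ}),
      (Subtype.val ⁻¹' (↑T \ {e.val}) : Set {f // f ∈ Sᶜ}) = Subtype.val ⁻¹' ↑T \ {e} := by
    intro e; ext f; simp
  have pr1_skip : ∀ (e : G.E), e ∉ S →
      (Subtype.val ⁻¹' (↑T \ {e}) : Set {f // f ∈ S}) = Subtype.val ⁻¹' ↑T := by
    intro e he; ext f
    have : f.val ≠ e := fun h => he (h ▸ f.2)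
    simp [this]
  have pr2_skip : ∀ (e : G.E), e ∈ S →
      (Subtype.val ⁻¹' (↑T \ {e}) : Set {f // f ∈ Sᶜ}) = Subtype.val ⁻¹' ↑T := by
    intro e he; ext f
    have : f.val ≠ e := fun h => (Finset.mem_compl.mp f.2) (h ▸ he)
    simp [this]
  constructor
  · rintro ⟨hc, hmin⟩
    obtain ⟨hc1, hc2⟩ := (hC ↑T).mp hc
    refine ⟨⟨by rwa [coe1], ?_⟩, ⟨by rwa [coe2], ?_⟩⟩
    · intro e he hbad
      rw [coe1] at he hbad
      have heT : e.val ∈ T := he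
      refine hmin e.val heT ?_
      refine (hC (↑T \ {e.val})).mpr ⟨?_, ?_⟩
      · erw [pr1_diff e]; assumption
      · erw [pr2_skip e.val e.2]; assumption
    · intro e he hbad
      rw [coe2] at he hbad
      have heT : e.val ∈ T := he
      refine hmin e.val heT ?_
      refine (hC (↑T \ {e.val})).mpr ⟨?_, ?_⟩
      · erw [pr1_skip e.val (Finset.mem_compl.mp e.2)]
        exact hc1
      · erw [pr2_diff e]; assumption
  · rintro ⟨⟨hc1, hmin1⟩, ⟨hc2, hmin2⟩⟩
    rw [coe1] at hc1 hmin1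
    rw [coe2] at hc2 hmin2
    refine ⟨(hC ↑T).mpr ⟨hc1, hc2⟩, ?_⟩
    intro e he hbad
    obtain ⟨hb1, hb2⟩ := (hC (↑T \ {e})).mp hbad
    by_cases heS : e ∈ S
    · refine hmin1 ⟨e, heS⟩ (by exact he) ?_
      erw [pr1_diff ⟨e, heS⟩] at hb1; exact hb1
    · refine hmin2 ⟨e, Finset.mem_compl.mpr heS⟩ (by exact he) ?_
      erw [pr2_diff ⟨e, Finset.mem_compl.mpr heS⟩] at hb2; exact hb2

end Sep2

end Multigraph


namespace Multigraph

open MvPolynomial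

lemma prod_X_eq {E : Type} [DecidableEq E] (A : Finset E) :
    (∏ e ∈ A, (X e : MvPolynomial E ℤ)) =
      monomial (∑ e ∈ A, Finsupp.single e 1) 1 := by
  induction A using Finset.induction with
  | empty => simp
  | insert _ _ hnotmem ih =>
    rename_i a A
    rw [Finset.prod_insert hnotmem, Finset.sum_insert hnotmem, ih, X, monomial_mul, one_mul]

lemma dsum_apply {E : Type} [DecidableEq E] (A : Finset E) (e : E) :
    (∑ f ∈ A, Finsupp.single f 1) e = if e ∈ A then 1 else 0 := by
  rw [Finset.sum_apply']
  simp [Finsupp.single_apply]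

lemma dsum_inj {E : Type} [DecidableEq E] {A B : Finset E}
    (hAB : (∑ f ∈ A, Finsupp.single f (1 : ℕ)) = ∑ f ∈ B, Finsupp.single f 1) : A = B := by
  ext e
  have := congrArg (fun d => d e) hAB
  simp only [dsum_apply] at this
  by_cases heA : e ∈ A <;> by_cases heB : e ∈ B <;> simp_all

lemma dsum_degree {E : Type} [DecidableEq E] (A : Finset E) :
    (∑ f ∈ A, Finsupp.single f (1 : ℕ)).sum (fun _ n => n) = A.card := by
  induction A using Finset.induction with
  | empty => simp
  | insert _ _ hnotmem ih =>
    rename_i a A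
    rw [Finset.sum_insert hnotmem, Finsupp.sum_add_index' (fun _ => rfl) (fun _ _ _ => rfl),
      Finsupp.sum_single_index rfl, ih, Finset.card_insert_of_notMem hnotmem]
    omega

lemma totalDegree_ne_zero (H : Multigraph) [Fintype H.E] [DecidableEq H.E]
    (hconn : H.ConnectsIn Set.univ) (hcyc : H.HasCycleIn Set.univ) :
    H.kirchhoff.totalDegree ≠ 0 := by
  classical
  obtain ⟨T₀, -, hT₀⟩ := H.exists_spanningTree Finset.univ (by simpa using hconn)
  have hcompl : (T₀ᶜ : Finset H.E).Nonempty := by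
    rw [Finset.nonempty_iff_ne_empty]
    intro hc
    have hTuniv : T₀ = Finset.univ := by
      rwa [Finset.compl_eq_empty_iff] at hc
    obtain ⟨e, -, hpath⟩ := hcyc
    have he : e ∈ (↑T₀ : Set H.E) := by simp [hTuniv]
    refine hT₀.2 e he (H.connectsIn_sdiff hT₀.1 ?_)
    have : (↑T₀ : Set H.E) = Set.univ := by simp [hTuniv]
    rwa [this]
  -- the coefficient of the monomial of T₀ᶜ is 1
  set d₀ : H.E →₀ ℕ := ∑ f ∈ T₀ᶜ, Finsupp.single f 1 with hd₀
  have hcoeff : coeff d₀ H.kirchhoff = 1 := by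
    rw [kirchhoff, coeff_sum]
    have hterm : ∀ T : Finset H.E,
        coeff d₀ (∏ e ∈ Tᶜ, (X e : MvPolynomial H.E ℤ)) =
          if (∑ f ∈ Tᶜ, Finsupp.single f 1) = d₀ then 1 else 0 := by
      intro T; rw [prod_X_eq, coeff_monomial]
    rw [Finset.sum_congr rfl fun T _ => hterm T]
    rw [← Finset.sum_filter]
    have : Finset.filter (fun T : Finset H.E => (∑ f ∈ Tᶜ, Finsupp.single f 1) = d₀)
        (Finset.univ.filter (fun T : Finset H.E => H.IsSpanningTree ↑T)) = {T₀} := by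
      ext T
      simp only [Finset.mem_filter, Finset.mem_univ, true_and, Finset.mem_singleton]
      constructor
      · rintro ⟨hsp, hd⟩
        have := dsum_inj hd
        exact compl_injective this
      · rintro rfl; exact ⟨hT₀, rfl⟩
    rw [this, Finset.sum_singleton]
  have hsupp : d₀ ∈ H.kirchhoff.support := by
    rw [mem_support_iff, hcoeff]; exact one_ne_zero
  have hle := le_totalDegree hsupp
  rw [hd₀] at hle
  rw [dsum_degree] at hle
  have : 1 ≤ T₀ᶜ.card := Finset.card_pos.mpr hcompl
  omega

end Multigraph

namespace Multigraph

lemma restrict_hasCycle (G : Multigraph) [DecidableEq G.E] (W : Set G.V) (S : Finset G.E)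
    (h : ∀ e ∈ S, G.fst e ∈ W ∧ G.snd e ∈ W) (hcyc : G.HasCycleIn ↑S) :
    (G.restrict W S h).HasCycleIn Set.univ := by
  obtain ⟨e, he, hpath⟩ := hcyc
  have heS : e ∈ S := he
  refine ⟨⟨e, heS⟩, Set.mem_univ _, ?_⟩
  have hsub : (↑S \ {e} : Set G.E) ⊆ ↑S := Set.diff_subset
  have hpre : (Subtype.val ⁻¹' (↑S \ {e}) : Set {f // f ∈ S}) =
      Set.univ \ {(⟨e, heS⟩ : {f // f ∈ S})} := by
    ext f; simp [Subtype.ext_iff, f.2]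
  have := G.rtg_restrict_up W S h hsub hpath (h e heS).1 (h e heS).2
  erw [hpre] at this
  exact this

section Main

variable (G : Multigraph) [Fintype G.E] [DecidableEq G.E]
    (W₁ W₂ : Set G.V) (a : G.V) (S : Finset G.E)
    (hWunion : W₁ ∪ W₂ = Set.univ) (hWinter : W₁ ∩ W₂ = {a})
    (h₁ : ∀ e ∈ S, G.fst e ∈ W₁ ∧ G.snd e ∈ W₁)
    (h₂ : ∀ e ∈ Sᶜ, G.fst e ∈ W₂ ∧ G.snd e ∈ W₂)

include hWunion hWinter h₁ h₂

lemma kirchhoff_factor :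
    G.kirchhoff =
      MvPolynomial.rename Subtype.val ((G.restrict W₁ S h₁).kirchhoff) *
        MvPolynomial.rename Subtype.val ((G.restrict W₂ Sᶜ h₂).kirchhoff) := by
  classical
  set G₁ := G.restrict W₁ S h₁
  set G₂ := G.restrict W₂ Sᶜ h₂
  rw [kirchhoff, kirchhoff, kirchhoff]
  erw [map_sum, map_sum]
  rw [Finset.sum_mul_sum]
  rw [← Finset.sum_product']
  refine Finset.sum_nbij'
    (fun T => (T.subtype (· ∈ S), T.subtype (· ∈ Sᶜ)))
    (fun p => p.1.map (Function.Embedding.subtype (· ∈ S)) ∪ p.2.map (Function.Embedding.subtype (· ∈ Sᶜ))) ?_ ?_ ?_ ?_ ?_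
  · intro T hT
    simp only [Finset.mem_filter, Finset.mem_univ, true_and] at hT
    have := (G.spanningTree_iff W₁ W₂ a S hWunion hWinter h₁ h₂ T).mp hT
    simp only [Finset.mem_product, Finset.mem_filter, Finset.mem_univ, true_and]
    exact ⟨Finset.mem_filter.mpr ⟨Finset.mem_univ _, this.1⟩, Finset.mem_filter.mpr ⟨Finset.mem_univ _, this.2⟩⟩
  · intro p hp
    simp only [Finset.mem_product, Finset.mem_filter, Finset.mem_univ, true_and] at hp
    simp only [Finset.mem_filter, Finset.mem_univ, true_and]
    change Finset {e // e ∈ S} × Finset {e // e ∈ Sᶜ} at p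
    have e1 : (p.1.map (Function.Embedding.subtype (· ∈ S)) ∪ p.2.map (Function.Embedding.subtype (· ∈ Sᶜ))).subtype (· ∈ S) = p.1 := by
      ext f
      simp only [Finset.mem_subtype, Finset.mem_union, Finset.mem_map,
        Function.Embedding.coe_subtype]
      constructor
      · rintro (⟨g, hg, hgf⟩ | ⟨g, hg, hgf⟩)
        · rwa [show g = f from Subtype.ext hgf] at hg
        · exact absurd (hgf ▸ g.2) (by simp [f.2])
      · intro hf; exact Or.inl ⟨f, hf, rfl⟩
    have e2 : (p.1.map (Function.Embedding.subtype (· ∈ S)) ∪ p.2.map (Function.Embedding.subtype (· ∈ Sᶜ))).subtype (· ∈ Sᶜ) = p.2 := by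
      ext f
      simp only [Finset.mem_subtype, Finset.mem_union, Finset.mem_map,
        Function.Embedding.coe_subtype]
      constructor
      · rintro (⟨g, hg, hgf⟩ | ⟨g, hg, hgf⟩)
        · exact absurd (hgf ▸ g.2) (by simpa using Finset.mem_compl.mp f.2)
        · rwa [show g = f from Subtype.ext hgf] at hg
      · intro hf; exact Or.inr ⟨f, hf, rfl⟩
    refine (G.spanningTree_iff W₁ W₂ a S hWunion hWinter h₁ h₂ _).mpr ?_
    rw [e1, e2]
    exact hp
  · intro T hT
    ext e
    simp only [Finset.mem_union, Finset.mem_map, Finset.mem_subtype,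
      Function.Embedding.coe_subtype]
    constructor
    · rintro (⟨g, hg, rfl⟩ | ⟨g, hg, rfl⟩) <;> exact hg
    · intro he
      by_cases heS : e ∈ S
      · exact Or.inl ⟨⟨e, heS⟩, he, rfl⟩
      · exact Or.inr ⟨⟨e, Finset.mem_compl.mpr heS⟩, he, rfl⟩
  · intro p hp
    change Finset {e // e ∈ S} × Finset {e // e ∈ Sᶜ} at p
    -- same computation as above
    have e1 : (p.1.map (Function.Embedding.subtype (· ∈ S)) ∪ p.2.map (Function.Embedding.subtype (· ∈ Sᶜ))).subtype (· ∈ S) = p.1 := by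
      ext f
      simp only [Finset.mem_subtype, Finset.mem_union, Finset.mem_map,
        Function.Embedding.coe_subtype]
      constructor
      · rintro (⟨g, hg, hgf⟩ | ⟨g, hg, hgf⟩)
        · rwa [show g = f from Subtype.ext hgf] at hg
        · exact absurd (hgf ▸ g.2) (by simp [f.2])
      · intro hf; exact Or.inl ⟨f, hf, rfl⟩
    have e2 : (p.1.map (Function.Embedding.subtype (· ∈ S)) ∪ p.2.map (Function.Embedding.subtype (· ∈ Sᶜ))).subtype (· ∈ Sᶜ) = p.2 := by
      ext f
      simp only [Finset.mem_subtype, Finset.mem_union, Finset.mem_map,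
        Function.Embedding.coe_subtype]
      constructor
      · rintro (⟨g, hg, hgf⟩ | ⟨g, hg, hgf⟩)
        · exact absurd (hgf ▸ g.2) (by simpa using Finset.mem_compl.mp f.2)
        · rwa [show g = f from Subtype.ext hgf] at hg
      · intro hf; exact Or.inr ⟨f, hf, rfl⟩
    exact Prod.ext e1 e2
  · intro T hT
    have hcompl : (T.subtype (· ∈ S))ᶜ.map (Function.Embedding.subtype (· ∈ S)) ∪ (T.subtype (· ∈ Sᶜ))ᶜ.map (Function.Embedding.subtype (· ∈ Sᶜ)) = Tᶜ := by
      ext e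
      simp only [Finset.mem_union, Finset.mem_map, Finset.mem_compl, Finset.mem_subtype,
        Function.Embedding.coe_subtype]
      constructor
      · rintro (⟨g, hg, rfl⟩ | ⟨g, hg, rfl⟩) <;> exact hg
      · intro he
        have heT := he
        by_cases heS : e ∈ S
        · exact Or.inl ⟨⟨e, heS⟩, heT, rfl⟩
        · exact Or.inr ⟨⟨e, Finset.mem_compl.mpr heS⟩, heT, rfl⟩
    have hdisj : Disjoint ((T.subtype (· ∈ S))ᶜ.map (Function.Embedding.subtype (· ∈ S))) ((T.subtype (· ∈ Sᶜ))ᶜ.map (Function.Embedding.subtype (· ∈ Sᶜ))) := by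
      rw [Finset.disjoint_left]
      rintro e he1 he2
      simp only [Finset.mem_map, Function.Embedding.coe_subtype] at he1 he2
      obtain ⟨g, -, rfl⟩ := he1
      obtain ⟨g', -, hg'⟩ := he2
      exact Finset.mem_compl.mp g'.2 (hg' ▸ g.2)
    rw [← hcompl, Finset.prod_union hdisj]
    erw [map_prod, map_prod]
    congr 1
    · rw [Finset.prod_map]
      simp only [MvPolynomial.rename_X, Function.Embedding.coe_subtype]
      exact Finset.prod_congr rfl (fun x _ => (MvPolynomial.rename_X _ _).symm)
    · rw [Finset.prod_map]
      simp only [MvPolynomial.rename_X, Function.Embedding.coe_subtype]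
      exact Finset.prod_congr rfl (fun x _ => (MvPolynomial.rename_X _ _).symm)

end Main

end Multigraph

/-- if a connected graph `Γ` has a separating vertex `a` (a separation
into subgraphs on vertex sets `W₁`, `W₂` with `W₁ ∩ W₂ = {a}`, the edges split as
`S` and `Sᶜ`) such that each of the two components contains a cycle, then the graph
polynomial factors as the product of the graph polynomials of the two components,
each non-constant; hence the graph hypersurface `X_Γ` is reducible. -/
theorem separating_vertex_gives_reducible
    (G : Multigraph) [Fintype G.V] [Fintype G.E] [DecidableEq G.E]
    (hconn : G.ConnectsIn Set.univ)
    (W₁ W₂ : Set G.V) (a : G.V) (S : Finset G.E)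
    (hWunion : W₁ ∪ W₂ = Set.univ) (hWinter : W₁ ∩ W₂ = {a})
    (h₁ : ∀ e ∈ S, G.fst e ∈ W₁ ∧ G.snd e ∈ W₁)
    (h₂ : ∀ e ∈ Sᶜ, G.fst e ∈ W₂ ∧ G.snd e ∈ W₂)
    (hc₁ : G.HasCycleIn ↑S) (hc₂ : G.HasCycleIn ↑(Sᶜ)) :
    G.kirchhoff =
      MvPolynomial.rename Subtype.val ((G.restrict W₁ S h₁).kirchhoff) *
        MvPolynomial.rename Subtype.val ((G.restrict W₂ Sᶜ h₂).kirchhoff) ∧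
    ((G.restrict W₁ S h₁).kirchhoff).totalDegree ≠ 0 ∧
    ((G.restrict W₂ Sᶜ h₂).kirchhoff).totalDegree ≠ 0 := by
  obtain ⟨hcu1, hcu2⟩ :=
    (G.connects_iff W₁ W₂ a S hWunion hWinter h₁ h₂ Set.univ).mp hconn
  erw [Set.preimage_univ] at hcu1 hcu2
  exact ⟨G.kirchhoff_factor W₁ W₂ a S hWunion hWinter h₁ h₂,
    Multigraph.totalDegree_ne_zero _ hcu1 (G.restrict_hasCycle W₁ S h₁ hc₁),
    Multigraph.totalDegree_ne_zero _ hcu2 (G.restrict_hasCycle W₂ Sᶜ h₂ hc₂)⟩
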